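/- Let H = ∂₁∂₂ + u and suppose operators A, A' satisfy H·A + A*·H = A*(u) and H·A' + (A')*·H = (A')*(u). Define derivations whose action on H is dH/dt = [A, H] − (A + A*)H = −A*(u) and dH/ds = [A', H] − (A' + (A')*)H = −(A')*(u). Then the commutator of the two flows applied to H equals [X, H] − (X + X*)H where X = dA/ds − dA'/dt + [A, A']; in particular, if X = R·H with R skew-adjoint, then the two flows commute on H: d²H/(ds dt) = d²H/(dt ds). -/
import Mathlib


/-- **Commutativity of the flows on `H`** (proof of the Theorem of the paper).

`R` models the ring `A[∂₁, ∂₂]` of differential operators over a commutative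
differential algebra `A` with adjoint given by the star operation; `Dt, Ds` are
evolutionary derivations of `R` (additive, Leibniz, commuting with `star` and killing
the symbols `∂₁, ∂₂`).  Let `H = ∂₁∂₂ + u` and suppose `A₀, A₀'` satisfy
`H·A₀ + A₀*·H = A₀*(u)` and `H·A₀' + A₀'*·H = A₀'*(u)` (the right-hand sides being
elements `w, w'` of `A` characterized modulo the right ideal generated by `∂₁, ∂₂`),
and that the flows act on `H` by `Dt H = [A₀, H] - (A₀ + A₀*)·H` and
`Ds H = [A₀', H] - (A₀' + A₀'*)·H`.  Then
`Ds (Dt H) - Dt (Ds H) = [X, H] - (X + X*)·H` where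
`X = Ds A₀ - Dt A₀' + [A₀, A₀']`; in particular, if `X = R₀·H` with `R₀` skew-adjoint,
the two flows commute on `H`. -/
theorem flows_commute_on_H
    {V R : Type*} [CommRing V] [Algebra ℂ V]
    [Ring R] [StarRing R]
    (ι : V →+* R) (hι : Function.Injective ι)
    (d1 d2 : R)
    (δ1 δ2 : Derivation ℂ V V)
    (hleib1 : ∀ v : V, d1 * ι v = ι v * d1 + ι (δ1 v))
    (hleib2 : ∀ v : V, d2 * ι v = ι v * d2 + ι (δ2 v))
    (hdcomm : d1 * d2 = d2 * d1)
    (hstar_d1 : star d1 = -d1)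
    (hstar_d2 : star d2 = -d2)
    (hstar_ι : ∀ v : V, star (ι v) = ι v)
    -- the two evolutionary derivations `d/dt` and `d/ds`
    (Dt Ds : R → R)
    (hDt_add : ∀ x y : R, Dt (x + y) = Dt x + Dt y)
    (hDs_add : ∀ x y : R, Ds (x + y) = Ds x + Ds y)
    (hDt_mul : ∀ x y : R, Dt (x * y) = Dt x * y + x * Dt y)
    (hDs_mul : ∀ x y : R, Ds (x * y) = Ds x * y + x * Ds y)
    (hDt_star : ∀ x : R, Dt (star x) = star (Dt x))
    (hDs_star : ∀ x : R, Ds (star x) = star (Ds x))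
    (hDt_d1 : Dt d1 = 0) (hDt_d2 : Dt d2 = 0)
    (hDs_d1 : Ds d1 = 0) (hDs_d2 : Ds d2 = 0)
    (u : V) (A₀ A₀' : R) (w w' : V)
    -- `w = A₀*(u)` and `w' = A₀'*(u)`
    (hw : ∃ X Y : R, star A₀ * ι u = ι w + X * d1 + Y * d2)
    (hw' : ∃ X Y : R, star A₀' * ι u = ι w' + X * d1 + Y * d2)
    (hA : (d1 * d2 + ι u) * A₀ + star A₀ * (d1 * d2 + ι u) = ι w)
    (hA' : (d1 * d2 + ι u) * A₀' + star A₀' * (d1 * d2 + ι u) = ι w')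
    (hDtH : Dt (d1 * d2 + ι u)
      = (A₀ * (d1 * d2 + ι u) - (d1 * d2 + ι u) * A₀)
        - (A₀ + star A₀) * (d1 * d2 + ι u))
    (hDsH : Ds (d1 * d2 + ι u)
      = (A₀' * (d1 * d2 + ι u) - (d1 * d2 + ι u) * A₀')
        - (A₀' + star A₀') * (d1 * d2 + ι u)) :
    (Ds (Dt (d1 * d2 + ι u)) - Dt (Ds (d1 * d2 + ι u))
      = ((Ds A₀ - Dt A₀' + (A₀ * A₀' - A₀' * A₀)) * (d1 * d2 + ι u)
          - (d1 * d2 + ι u) * (Ds A₀ - Dt A₀' + (A₀ * A₀' - A₀' * A₀)))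
        - ((Ds A₀ - Dt A₀' + (A₀ * A₀' - A₀' * A₀))
            + star (Ds A₀ - Dt A₀' + (A₀ * A₀' - A₀' * A₀)))
          * (d1 * d2 + ι u)) ∧
    (∀ R₀ : R, Ds A₀ - Dt A₀' + (A₀ * A₀' - A₀' * A₀) = R₀ * (d1 * d2 + ι u) →
      star R₀ = -R₀ →
      Ds (Dt (d1 * d2 + ι u)) = Dt (Ds (d1 * d2 + ι u))) := by
  have hDs0 : Ds 0 = 0 := by
    have h := hDs_add 0 0; rw [add_zero] at h; exact left_eq_add.mp h
  have hDt0 : Dt 0 = 0 := by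
    have h := hDt_add 0 0; rw [add_zero] at h; exact left_eq_add.mp h
  have hDs_neg : ∀ x : R, Ds (-x) = -Ds x := by
    intro x
    have h := hDs_add x (-x); rw [add_neg_cancel, hDs0] at h
    exact eq_neg_of_add_eq_zero_right h.symm
  have hDt_neg : ∀ x : R, Dt (-x) = -Dt x := by
    intro x
    have h := hDt_add x (-x); rw [add_neg_cancel, hDt0] at h
    exact eq_neg_of_add_eq_zero_right h.symm
  have hDs_sub : ∀ x y : R, Ds (x - y) = Ds x - Ds y := by
    intro x y; rw [sub_eq_add_neg, hDs_add, hDs_neg, ← sub_eq_add_neg]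
  have hDt_sub : ∀ x y : R, Dt (x - y) = Dt x - Dt y := by
    intro x y; rw [sub_eq_add_neg, hDt_add, hDt_neg, ← sub_eq_add_neg]
  have hstarh : star (d1 * d2 + ι u) = d1 * d2 + ι u := by
    rw [star_add, star_mul, hstar_d1, hstar_d2, hstar_ι, neg_mul_neg, ← hdcomm]
  set hH : R := d1 * d2 + ι u with hHdef
  clear_value hH
  have key : Ds (Dt hH) - Dt (Ds hH)
      = ((Ds A₀ - Dt A₀' + (A₀ * A₀' - A₀' * A₀)) * hH
          - hH * (Ds A₀ - Dt A₀' + (A₀ * A₀' - A₀' * A₀)))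
        - ((Ds A₀ - Dt A₀' + (A₀ * A₀' - A₀' * A₀))
            + star (Ds A₀ - Dt A₀' + (A₀ * A₀' - A₀' * A₀))) * hH := by
    rw [hDtH, hDsH]
    simp only [hDs_sub, hDt_sub, hDs_mul, hDt_mul, hDs_add, hDt_add,
      hDs_star, hDt_star, hDsH, hDtH, star_add, star_sub, star_mul]
    noncomm_ring
  refine ⟨key, ?_⟩
  intro R₀ hX hR
  rw [hX, star_mul, hstarh, hR] at key
  rw [show R₀ * hH * hH - hH * (R₀ * hH) - (R₀ * hH + hH * -R₀) * hH = 0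
    from by noncomm_ring] at key
  exact sub_eq_zero.mp key
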